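/- Let θ_1, θ_2, θ_3 : ℝ → ℝ be a solution of the identical Kuramoto model for N = 3 and let Δ_1 = θ_1 − θ_2, Δ_2 = θ_2 − θ_3, Δ_3 = θ_3 − θ_1. At every time t such that sin((Δ_1(t)−Δ_2(t))/2) ≠ 0, sin((Δ_2(t)−Δ_3(t))/2) ≠ 0, sin((Δ_3(t)−Δ_1(t))/2) ≠ 0 and sin(Δ_2(t)/2) ≠ 0, the ratio ψ_inv(t) = ψ_1(t)/ψ_2(t) is differentiable at t with derivative ψ_inv'(t) = 0, where ψ_1 = sin³(Δ_1/2)/(sin((Δ_1−Δ_2)/2)·sin((Δ_3−Δ_1)/2)) and ψ_2 = sin³(Δ_2/2)/(sin((Δ_2−Δ_3)/2)·sin((Δ_1−Δ_2)/2)). -/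

import Mathlib

set_option maxHeartbeats 2000000 in
/-- For the identical Kuramoto model with `N = 3`, at every time `t`
where the denominators of `ψ₁` and `ψ₂` are nonvanishing and `sin(Δ₂/2) ≠ 0`,
the ratio `ψ_inv = ψ₁/ψ₂` is differentiable at `t` with derivative `0`. -/
theorem koopman_invariant_psi_inv
    (ω K : ℝ) (θ1 θ2 θ3 : ℝ → ℝ)
    (h1 : ∀ t : ℝ, HasDerivAt θ1
      (ω + K / 3 * (Real.sin (θ1 t - θ1 t) + Real.sin (θ2 t - θ1 t) + Real.sin (θ3 t - θ1 t))) t)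
    (h2 : ∀ t : ℝ, HasDerivAt θ2
      (ω + K / 3 * (Real.sin (θ1 t - θ2 t) + Real.sin (θ2 t - θ2 t) + Real.sin (θ3 t - θ2 t))) t)
    (h3 : ∀ t : ℝ, HasDerivAt θ3
      (ω + K / 3 * (Real.sin (θ1 t - θ3 t) + Real.sin (θ2 t - θ3 t) + Real.sin (θ3 t - θ3 t))) t)
    (Δ1 Δ2 Δ3 : ℝ → ℝ)
    (hΔ1 : ∀ t, Δ1 t = θ1 t - θ2 t)
    (hΔ2 : ∀ t, Δ2 t = θ2 t - θ3 t)
    (hΔ3 : ∀ t, Δ3 t = θ3 t - θ1 t)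
    (ψ1 ψ2 ψinv : ℝ → ℝ)
    (hψ1 : ∀ t, ψ1 t = Real.sin (Δ1 t / 2) ^ 3
      / (Real.sin ((Δ1 t - Δ2 t) / 2) * Real.sin ((Δ3 t - Δ1 t) / 2)))
    (hψ2 : ∀ t, ψ2 t = Real.sin (Δ2 t / 2) ^ 3
      / (Real.sin ((Δ2 t - Δ3 t) / 2) * Real.sin ((Δ1 t - Δ2 t) / 2)))
    (hψinv : ∀ t, ψinv t = ψ1 t / ψ2 t) :
    ∀ t : ℝ,
      Real.sin ((Δ1 t - Δ2 t) / 2) ≠ 0 →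
      Real.sin ((Δ2 t - Δ3 t) / 2) ≠ 0 →
      Real.sin ((Δ3 t - Δ1 t) / 2) ≠ 0 →
      Real.sin (Δ2 t / 2) ≠ 0 →
      HasDerivAt ψinv 0 t := by
  intro t hA hB hC hs2
  simp only [hΔ1, hΔ2, hΔ3] at hA hB hC hs2
  have hθ1 := h1 t; have hθ2 := h2 t; have hθ3 := h3 t
  have hF1 := (Real.hasDerivAt_sin ((θ1 t - θ2 t) / 2)).comp t ((hθ1.sub hθ2).div_const 2)
  have hF2 := (Real.hasDerivAt_sin ((θ2 t - θ3 t) / 2)).comp t ((hθ2.sub hθ3).div_const 2)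
  have hFA := (Real.hasDerivAt_sin (((θ1 t - θ2 t) - (θ2 t - θ3 t)) / 2)).comp t
    (((hθ1.sub hθ2).sub (hθ2.sub hθ3)).div_const 2)
  have hFB := (Real.hasDerivAt_sin (((θ2 t - θ3 t) - (θ3 t - θ1 t)) / 2)).comp t
    (((hθ2.sub hθ3).sub (hθ3.sub hθ1)).div_const 2)
  have hFC := (Real.hasDerivAt_sin (((θ3 t - θ1 t) - (θ1 t - θ2 t)) / 2)).comp t
    (((hθ3.sub hθ1).sub (hθ1.sub hθ2)).div_const 2)
  have hP1 := (hF1.pow 3).div (hFA.mul hFC) (mul_ne_zero hA hC)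
  have hP2 := (hF2.pow 3).div (hFB.mul hFA) (mul_ne_zero hB hA)
  simp only [Function.comp_def] at hP1 hP2
  set x := θ1 t with hx
  set y := θ2 t with hy
  set z := θ3 t with hz
  clear_value x y z
  have hQ1 : HasDerivAt (fun s => Real.sin ((θ1 s - θ2 s) / 2) ^ 3
      / (Real.sin (((θ1 s - θ2 s) - (θ2 s - θ3 s)) / 2)
        * Real.sin (((θ3 s - θ1 s) - (θ1 s - θ2 s)) / 2)))
      (-K * (Real.sin ((x - y) / 2) ^ 3
        / (Real.sin ((x - y - (y - z)) / 2) * Real.sin ((z - x - (x - y)) / 2)))) t := by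
    convert hP1 using 1
    case e'_4 => rfl
    case e'_5 => rfl
    case e'_8 => rfl
    simp only [Pi.mul_apply, Pi.pow_apply, Pi.sub_apply, ← hx, ← hy, ← hz]
    simp only [show (x - y - (y - z)) / 2 = (x - y) / 2 - (y - z) / 2 from by ring,
      show (z - x - (x - y)) / 2 = -(2 * ((x - y) / 2)) - (y - z) / 2 from by ring,
      show Real.sin (y - x) = Real.sin (-(2 * ((x - y) / 2))) from by congr 1; ring,
      show Real.sin (z - x) = Real.sin (-(2 * ((x - y) / 2)) - 2 * ((y - z) / 2)) from by congr 1; ring,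
      show Real.sin (x - y) = Real.sin (2 * ((x - y) / 2)) from by congr 1; ring,
      show Real.sin (z - y) = Real.sin (-(2 * ((y - z) / 2))) from by congr 1; ring,
      show Real.sin (x - z) = Real.sin (2 * ((x - y) / 2) + 2 * ((y - z) / 2)) from by congr 1; ring,
      show Real.sin (y - z) = Real.sin (2 * ((y - z) / 2)) from by congr 1; ring,
      sub_self, Real.sin_zero] at hA hC ⊢
    rw [← mul_div_assoc, div_eq_div_iff (mul_ne_zero hA hC) (pow_ne_zero 2 (mul_ne_zero hA hC))]
    simp only [Real.sin_add, Real.cos_add, Real.sin_sub, Real.cos_sub, Real.sin_neg, Real.cos_neg,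
      Real.sin_two_mul, Real.cos_two_mul]
    set sa := Real.sin ((x - y) / 2) with hsa
    set ca := Real.cos ((x - y) / 2) with hca
    set sb := Real.sin ((y - z) / 2) with hsb
    set cb := Real.cos ((y - z) / 2) with hcb
    have pa : sa ^ 2 + ca ^ 2 = 1 := Real.sin_sq_add_cos_sq _
    have pb : sb ^ 2 + cb ^ 2 = 1 := Real.sin_sq_add_cos_sq _
    linear_combination (2*sa^2*ca^3*sb^5*cb*K - 8*sa^2*ca^5*sb^5*cb*K + 8*sa^2*ca^7*sb^5*cb*K + sa^3*ca^2*sb^4*K - 4*sa^3*ca^2*sb^4*cb^2*K - 4*sa^3*ca^4*sb^4*K + 8*sa^3*ca^4*sb^4*cb^2*K + 4*sa^3*ca^6*sb^4*K - sa^4*ca*sb^3*cb*K + 2*sa^4*ca*sb^3*cb^3*K + 4*sa^4*ca^3*sb^3*cb*K + 4*sa^4*ca^3*sb^3*cb^3*K - 4*sa^4*ca^3*sb^5*cb*K + 4*sa^4*ca^5*sb^3*cb*K - 16*sa^4*ca^5*sb^3*cb^3*K + 4*sa^5*sb^2*cb^2*K - 4*sa^5*sb^2*cb^4*K - 4*sa^5*sb^4*cb^2*K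 + 8*sa^5*ca^2*sb^2*cb^2*K - 12*sa^5*ca^2*sb^2*cb^4*K - 4*sa^5*ca^2*sb^4*cb^2*K - 4*sa^5*ca^4*sb^2*cb^2*K - 4*sa^6*ca*sb*cb^3*K + 4*sa^6*ca*sb*cb^5*K - 4*sa^6*ca*sb^3*cb*K + 8*sa^6*ca*sb^3*cb^3*K + 4*sa^6*ca*sb^5*cb*K - 4*sa^6*ca^3*sb*cb^3*K + 8*sa^6*ca^3*sb*cb^5*K - 4*sa^7*cb^4*K + 4*sa^7*cb^6*K - 4*sa^7*sb^2*cb^2*K + 8*sa^7*sb^2*cb^4*K + 4*sa^7*sb^4*cb^2*K) * pa + (-sa^4*ca*sb^3*cb*K - 3*sa^5*sb^2*cb^2*K + 4*sa^6*ca*sb^3*cb*K + 4*sa^7*cb^4*K + 8*sa^7*sb^2*cb^2*K - 4*sa^8*ca*sb*cb^3*K - 4*sa^8*ca*sb^3*cb*K - 4*sa^9*cb^4*K - 4*sa^9*sb^2*cb^2*K) * pb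
  have hQ2 : HasDerivAt (fun s => Real.sin ((θ2 s - θ3 s) / 2) ^ 3
      / (Real.sin (((θ2 s - θ3 s) - (θ3 s - θ1 s)) / 2)
        * Real.sin (((θ1 s - θ2 s) - (θ2 s - θ3 s)) / 2)))
      (-K * (Real.sin ((y - z) / 2) ^ 3
        / (Real.sin ((y - z - (z - x)) / 2) * Real.sin ((x - y - (y - z)) / 2)))) t := by
    convert hP2 using 1
    case e'_4 => rfl
    case e'_5 => rfl
    case e'_8 => rfl
    simp only [Pi.mul_apply, Pi.pow_apply, Pi.sub_apply, ← hx, ← hy, ← hz]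
    simp only [show (x - y - (y - z)) / 2 = (x - y) / 2 - (y - z) / 2 from by ring,
      show (y - z - (z - x)) / 2 = (x - y) / 2 + 2 * ((y - z) / 2) from by ring,
      show Real.sin (y - x) = Real.sin (-(2 * ((x - y) / 2))) from by congr 1; ring,
      show Real.sin (z - x) = Real.sin (-(2 * ((x - y) / 2)) - 2 * ((y - z) / 2)) from by congr 1; ring,
      show Real.sin (x - y) = Real.sin (2 * ((x - y) / 2)) from by congr 1; ring,
      show Real.sin (z - y) = Real.sin (-(2 * ((y - z) / 2))) from by congr 1; ring,
      show Real.sin (x - z) = Real.sin (2 * ((x - y) / 2) + 2 * ((y - z) / 2)) from by congr 1; ring,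
      show Real.sin (y - z) = Real.sin (2 * ((y - z) / 2)) from by congr 1; ring,
      sub_self, Real.sin_zero] at hB hA ⊢
    rw [← mul_div_assoc, div_eq_div_iff (mul_ne_zero hB hA) (pow_ne_zero 2 (mul_ne_zero hB hA))]
    simp only [Real.sin_add, Real.cos_add, Real.sin_sub, Real.cos_sub, Real.sin_neg, Real.cos_neg,
      Real.sin_two_mul, Real.cos_two_mul]
    set sa := Real.sin ((x - y) / 2) with hsa
    set ca := Real.cos ((x - y) / 2) with hca
    set sb := Real.sin ((y - z) / 2) with hsb
    set cb := Real.cos ((y - z) / 2) with hcb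
    have pa : sa ^ 2 + ca ^ 2 = 1 := Real.sin_sq_add_cos_sq _
    have pb : sb ^ 2 + cb ^ 2 = 1 := Real.sin_sq_add_cos_sq _
    linear_combination (4*ca^4*sb^7*cb^2*K - 4*sa*ca*sb^6*cb^3*K + 4*sa*ca*sb^6*cb^5*K + 4*sa*ca*sb^8*cb^3*K - 4*sa*ca^3*sb^6*cb*K - 4*sa*ca^3*sb^6*cb^3*K + 8*sa*ca^3*sb^6*cb^5*K + 8*sa*ca^3*sb^8*cb^3*K + 4*sa^2*sb^5*cb^2*K - 4*sa^2*sb^5*cb^6*K - 4*sa^2*sb^7*cb^2*K - 4*sa^2*sb^7*cb^4*K + sa^2*ca^2*sb^5*K + 8*sa^2*ca^2*sb^5*cb^2*K - 12*sa^2*ca^2*sb^5*cb^4*K - 8*sa^2*ca^2*sb^7*cb^2*K - 3*sa^3*ca*sb^4*cb*K - 2*sa^3*ca*sb^4*cb^3*K + 20*sa^3*ca*sb^4*cb^5*K - 16*sa^3*ca*sb^4*cb^7*K + 2*sa^3*ca*sb^6*cb*K + 16*sa^3*ca*sb^6*cb^3*K - 24*sa^3*ca*sb^6*cb^5*K - 8*sa^3*ca*sb^8*cb^3*K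 + 4*sa^4*sb^3*cb^2*K - 12*sa^4*sb^3*cb^4*K + 8*sa^4*sb^3*cb^6*K - 12*sa^4*sb^5*cb^2*K + 16*sa^4*sb^5*cb^4*K + 8*sa^4*sb^7*cb^2*K) * pa + (4*sa*ca*sb^6*cb^3*K - 4*sa^2*sb^5*cb^2*K - 4*sa^2*sb^5*cb^4*K + sa^3*ca*sb^4*cb*K + 8*sa^3*ca*sb^4*cb^3*K - 12*sa^3*ca*sb^4*cb^5*K - 12*sa^3*ca*sb^6*cb^3*K - 3*sa^4*sb^3*cb^2*K + 4*sa^4*sb^3*cb^4*K + 4*sa^4*sb^3*cb^6*K + 12*sa^4*sb^5*cb^2*K + 4*sa^4*sb^5*cb^4*K + 2*sa^5*ca*sb^2*cb^3*K - 8*sa^5*ca*sb^2*cb^5*K + 8*sa^5*ca*sb^2*cb^7*K - 2*sa^5*ca*sb^4*cb*K - 8*sa^5*ca*sb^4*cb^3*K + 16*sa^5*ca*sb^4*cb^5*K + 8*sa^5*ca*sb^6*cb^3*K + 4*sa^6*sb^3*cb^2*K - 8*sa^6*sb^3*cb^4*K - 8*sa^6*sb^5*cb^2*K) * pb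
  have hψ2ne : (Real.sin ((θ2 t - θ3 t) / 2) ^ 3
      / (Real.sin ((θ2 t - θ3 t - (θ3 t - θ1 t)) / 2)
        * Real.sin ((θ1 t - θ2 t - (θ2 t - θ3 t)) / 2))) ≠ 0 := by
    rw [← hx, ← hy, ← hz]
    exact div_ne_zero (pow_ne_zero 3 hs2) (mul_ne_zero hB hA)
  have hInv := hQ1.div hQ2 hψ2ne
  have eInv : ψinv = fun s => (Real.sin ((θ1 s - θ2 s) / 2) ^ 3
      / (Real.sin (((θ1 s - θ2 s) - (θ2 s - θ3 s)) / 2)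
        * Real.sin (((θ3 s - θ1 s) - (θ1 s - θ2 s)) / 2)))
      / (Real.sin ((θ2 s - θ3 s) / 2) ^ 3
      / (Real.sin (((θ2 s - θ3 s) - (θ3 s - θ1 s)) / 2)
        * Real.sin (((θ1 s - θ2 s) - (θ2 s - θ3 s)) / 2))) := by
    funext s; rw [hψinv, hψ1, hψ2, hΔ1, hΔ2, hΔ3]
  rw [eInv]
  convert hInv using 1
  case e'_4 => rfl
  case e'_5 => rfl
  case e'_8 => rfl
  rw [← hx, ← hy, ← hz]
  ring
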